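/- Let X_1,…,X_n be arbitrary {0,1}-valued random variables on a probability space, and let X*_1,…,X*_n be mutually independent {0,1}-valued random variables such that for each i, X*_i is independent of (X_1,…,X_{i−1}). Assume that for every i and all x_1,…,x_{i−1} ∈ {0,1} with P(X_1 = x_1,…,X_{i−1} = x_{i−1}) > 0, one has P(X_i = 1 | X_1 = x_1,…,X_{i−1} = x_{i−1}) ≥ P(X*_i = 1). Then for every k ≥ 0: P(∑_{i=1}^n X_i ≤ k) ≤ P(∑_{i=1}^n X*_i ≤ k). -/

import Mathlib

open MeasureTheory ProbabilityTheory

/-- Splitting a sum event according to the value of a `{0,1}`-valued variable. -/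
lemma st16_split {Ω : Type*} [MeasurableSpace Ω] (μ : Measure Ω)
    (S : Ω → ℕ) (Z : Ω → ℕ) (k : ℕ)
    (hS : Measurable S) (hZ : Measurable Z) (hZ01 : ∀ ω, Z ω ≤ 1) :
    μ {ω | S ω + Z ω ≤ k} =
      μ ({ω | Z ω = 0} ∩ {ω | S ω ≤ k}) + μ ({ω | Z ω = 1} ∩ {ω | S ω + 1 ≤ k}) := by
  have hset : {ω | S ω + Z ω ≤ k} =
      ({ω | Z ω = 0} ∩ {ω | S ω ≤ k}) ∪ ({ω | Z ω = 1} ∩ {ω | S ω + 1 ≤ k}) := by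
    ext ω
    simp only [Set.mem_setOf_eq, Set.mem_union, Set.mem_inter_iff]
    have := hZ01 ω
    omega
  rw [hset]
  refine measure_union ?_ ?_
  · refine Set.disjoint_left.2 ?_
    rintro ω ⟨h0, -⟩ ⟨h1, -⟩
    simp only [Set.mem_setOf_eq] at h0 h1
    omega
  · exact (hZ (measurableSet_singleton 1)).inter
      (hS (MeasurableSet.of_discrete (s := {a | a + 1 ≤ k})))

/-- Atom decomposition: domination on atoms implies domination on sum-level sets. -/
lemma st16_atomdom {Ω : Type*} [MeasurableSpace Ω] (μ : Measure Ω)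
    (m : ℕ) (Y : Fin m → Ω → ℕ) (Z : Ω → ℕ)
    (hY01 : ∀ j ω, Y j ω ≤ 1) (hYmeas : ∀ j, Measurable (Y j)) (hZ : Measurable Z)
    (p : ENNReal)
    (hdom : ∀ x : Fin m → ℕ, 0 < μ {ω | ∀ j, Y j ω = x j} →
      p * μ {ω | ∀ j, Y j ω = x j} ≤ μ ({ω | Z ω = 1} ∩ {ω | ∀ j, Y j ω = x j}))
    (k : ℕ) :
    p * μ {ω | ∑ j, Y j ω = k} ≤ μ ({ω | Z ω = 1} ∩ {ω | ∑ j, Y j ω = k}) := by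
  classical
  set F : Finset (Fin m → ℕ) :=
    (Fintype.piFinset fun _ : Fin m => ({0, 1} : Finset ℕ)).filter (fun x => ∑ j, x j = k) with hF
  have hset : {ω | ∑ j, Y j ω = k} = ⋃ x ∈ F, {ω | ∀ j, Y j ω = x j} := by
    ext ω
    simp only [Set.mem_setOf_eq, Set.mem_iUnion, hF, Finset.mem_filter,
      Fintype.mem_piFinset, Finset.mem_insert, Finset.mem_singleton]
    constructor
    · intro h
      refine ⟨fun j => Y j ω, ⟨fun j => ?_, h⟩, fun j => rfl⟩
      show Y j ω = 0 ∨ Y j ω = 1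
      have := hY01 j ω; omega
    · rintro ⟨x, ⟨-, hx⟩, hxy⟩
      rw [← hx]
      exact Finset.sum_congr rfl fun j _ => hxy j
  have hmeasatom : ∀ x : Fin m → ℕ, MeasurableSet {ω | ∀ j, Y j ω = x j} := by
    intro x
    have : {ω | ∀ j, Y j ω = x j} = ⋂ j, (Y j) ⁻¹' {x j} := by
      ext ω; simp [Set.mem_iInter]
    rw [this]
    exact MeasurableSet.iInter fun j => (hYmeas j) (measurableSet_singleton _)
  have hdisj : (↑F : Set (Fin m → ℕ)).PairwiseDisjoint
      (fun x => {ω | ∀ j, Y j ω = x j}) := by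
    intro x _ y _ hxy
    refine Set.disjoint_left.2 fun ω hx hy => hxy ?_
    funext j
    rw [← hx j, ← hy j]
  have h1 : μ {ω | ∑ j, Y j ω = k} = ∑ x ∈ F, μ {ω | ∀ j, Y j ω = x j} := by
    rw [hset]
    exact measure_biUnion_finset hdisj fun x _ => hmeasatom x
  have h2 : μ ({ω | Z ω = 1} ∩ {ω | ∑ j, Y j ω = k}) =
      ∑ x ∈ F, μ ({ω | Z ω = 1} ∩ {ω | ∀ j, Y j ω = x j}) := by
    rw [hset, Set.inter_iUnion₂]
    refine measure_biUnion_finset ?_ ?_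
    · intro x hx y hy hxy
      exact (hdisj hx hy hxy).mono Set.inter_subset_right Set.inter_subset_right
    · intro x _
      exact (hZ (measurableSet_singleton 1)).inter (hmeasatom x)
  rw [h1, h2, Finset.mul_sum]
  refine Finset.sum_le_sum fun x _ => ?_
  rcases eq_or_lt_of_le (zero_le : 0 ≤ μ {ω | ∀ j, Y j ω = x j}) with h | h
  · rw [← h, mul_zero]; exact zero_le
  · exact hdom x h

/-- Independence of a prefix-sum of the `Xs` from a later coordinate. -/
lemma st16_indep {Ω : Type*} [MeasurableSpace Ω] (μ : Measure Ω) [IsProbabilityMeasure μ]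
    (n : ℕ) (Xs : Fin n → Ω → ℕ) (hmeas : ∀ i, Measurable (Xs i))
    (hindep : iIndepFun Xs μ) (i : Fin n)
    (T : Set ℕ) (c : ℕ) :
    μ ({ω | (∑ j : Fin i.val, Xs (Fin.castLE i.isLt.le j) ω) ∈ T} ∩ {ω | Xs i ω = c}) =
      μ {ω | (∑ j : Fin i.val, Xs (Fin.castLE i.isLt.le j) ω) ∈ T} * μ {ω | Xs i ω = c} := by
  classical
  set s : Finset (Fin n) := Finset.image (Fin.castLE i.isLt.le) Finset.univ with hs
  have hnotmem : i ∉ s := by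
    simp only [hs, Finset.mem_image, Finset.mem_univ, true_and]
    rintro ⟨j, hj⟩
    have : (j : ℕ) = (i : ℕ) := congrArg Fin.val hj
    omega
  have hind : IndepFun (∑ j ∈ s, Xs j) (Xs i) μ :=
    hindep.indepFun_finsetSum_of_notMem hmeas hnotmem
  have hsum : (∑ j ∈ s, Xs j) = fun ω => ∑ j : Fin i.val, Xs (Fin.castLE i.isLt.le j) ω := by
    funext ω
    rw [Finset.sum_apply, hs, Finset.sum_image (fun a _ b _ h => Fin.castLE_injective _ h)]
  rw [hsum] at hind
  have := hind.measure_inter_preimage_eq_mul (s := T) (t := {c})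
    (MeasurableSet.of_discrete) (MeasurableSet.of_discrete)
  simpa [Set.preimage] using this

lemma st16_aux {Ω : Type*} [MeasurableSpace Ω] (μ : Measure Ω)
    [IsProbabilityMeasure μ] (n : ℕ) (X Xs : Fin n → Ω → ℕ)
    (hX01 : ∀ i ω, X i ω ≤ 1) (hXs01 : ∀ i ω, Xs i ω ≤ 1)
    (hXmeas : ∀ i, Measurable (X i)) (hXsmeas : ∀ i, Measurable (Xs i))
    (hindep : iIndepFun Xs μ)
    (hdom : ∀ (i : Fin n) (x : Fin i.val → ℕ),
      0 < μ {ω | ∀ j : Fin i.val, X (Fin.castLE i.isLt.le j) ω = x j} →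
      μ {ω | Xs i ω = 1} * μ {ω | ∀ j : Fin i.val, X (Fin.castLE i.isLt.le j) ω = x j} ≤
        μ ({ω | X i ω = 1} ∩ {ω | ∀ j : Fin i.val, X (Fin.castLE i.isLt.le j) ω = x j})) :
    ∀ (m : ℕ) (hm : m ≤ n) (k : ℕ),
      μ {ω | ∑ j : Fin m, X (Fin.castLE hm j) ω ≤ k} ≤
        μ {ω | ∑ j : Fin m, Xs (Fin.castLE hm j) ω ≤ k} := by
  intro m
  induction m with
  | zero => intro hm k; simp
  | succ m ih =>
    intro hm k
    set i : Fin n := ⟨m, hm⟩ with hi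
    have le' : m ≤ n := i.isLt.le
    set S : Ω → ℕ := fun ω => ∑ j : Fin m, X (Fin.castLE le' j) ω with hSdef
    set Ss : Ω → ℕ := fun ω => ∑ j : Fin m, Xs (Fin.castLE le' j) ω with hSsdef
    have hS : Measurable S := Finset.measurable_sum _ fun j _ => hXmeas _
    have hSs : Measurable Ss := Finset.measurable_sum _ fun j _ => hXsmeas _
    have hgoalL : {ω | ∑ j : Fin (m+1), X (Fin.castLE hm j) ω ≤ k}
        = {ω | S ω + X i ω ≤ k} := by
      ext ω; simp only [Set.mem_setOf_eq, Fin.sum_univ_castSucc]; rfl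
    have hgoalR : {ω | ∑ j : Fin (m+1), Xs (Fin.castLE hm j) ω ≤ k}
        = {ω | Ss ω + Xs i ω ≤ k} := by
      ext ω; simp only [Set.mem_setOf_eq, Fin.sum_univ_castSucc]; rfl
    rw [hgoalL, hgoalR]
    set p : ENNReal := μ {ω | Xs i ω = 1} with hp
    set q : ENNReal := μ {ω | Xs i ω = 0} with hq
    -- q + p = 1
    have hpq : q + p = 1 := by
      rw [hq, hp, ← measure_union ?_ (show MeasurableSet {ω | Xs i ω = 1} from
        (hXsmeas i) (measurableSet_singleton 1))]
      · have : {ω | Xs i ω = 0} ∪ {ω | Xs i ω = 1} = Set.univ := by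
          ext ω
          simp only [Set.mem_union, Set.mem_setOf_eq, Set.mem_univ, iff_true]
          have := hXs01 i ω; omega
        rw [this, measure_univ]
      · refine Set.disjoint_left.2 fun ω h0 h1 => ?_
        simp only [Set.mem_setOf_eq] at h0 h1; omega
    -- atom domination for the level set {S = k}
    have hatom : p * μ {ω | S ω = k} ≤ μ ({ω | X i ω = 1} ∩ {ω | S ω = k}) :=
      st16_atomdom μ m (fun j => X (Fin.castLE le' j)) (X i)
        (fun j ω => hX01 _ ω) (fun j => hXmeas _) (hXmeas i) p
        (fun x hx => hdom i x hx) k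
    -- partition of {S = k} by the value of X i
    have hBpart : μ ({ω | X i ω = 0} ∩ {ω | S ω = k}) + μ ({ω | X i ω = 1} ∩ {ω | S ω = k})
        = μ {ω | S ω = k} := by
      rw [← measure_union ?_ (show MeasurableSet ({ω | X i ω = 1} ∩ {ω | S ω = k}) from
        ((hXmeas i) (measurableSet_singleton 1)).inter (hS (measurableSet_singleton k)))]
      · congr 1
        ext ω
        simp only [Set.mem_union, Set.mem_inter_iff, Set.mem_setOf_eq]
        have := hX01 i ω; omega
      · refine Set.disjoint_left.2 ?_
        rintro ω ⟨h0, -⟩ ⟨h1, -⟩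
        simp only [Set.mem_setOf_eq] at h0 h1; omega
    have hfin : p * μ {ω | S ω = k} ≠ ⊤ :=
      ENNReal.mul_ne_top (measure_ne_top μ _) (measure_ne_top μ _)
    -- key estimate on the boundary piece
    have hC : μ ({ω | X i ω = 0} ∩ {ω | S ω = k}) ≤ q * μ {ω | S ω = k} := by
      have h1 : μ ({ω | X i ω = 0} ∩ {ω | S ω = k}) + p * μ {ω | S ω = k}
          ≤ q * μ {ω | S ω = k} + p * μ {ω | S ω = k} := by
        calc μ ({ω | X i ω = 0} ∩ {ω | S ω = k}) + p * μ {ω | S ω = k}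
            ≤ μ ({ω | X i ω = 0} ∩ {ω | S ω = k})
              + μ ({ω | X i ω = 1} ∩ {ω | S ω = k}) := add_le_add_right hatom _
          _ = μ {ω | S ω = k} := hBpart
          _ = (q + p) * μ {ω | S ω = k} := by rw [hpq, one_mul]
          _ = q * μ {ω | S ω = k} + p * μ {ω | S ω = k} := add_mul _ _ _
      exact (ENNReal.add_le_add_iff_right hfin).1 h1
    -- decompose {X i = 0} ∩ {S ≤ k}
    have hA0split : μ ({ω | X i ω = 0} ∩ {ω | S ω ≤ k})
        = μ ({ω | X i ω = 0} ∩ {ω | S ω + 1 ≤ k}) + μ ({ω | X i ω = 0} ∩ {ω | S ω = k}) := by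
      rw [← measure_union ?_ (show MeasurableSet ({ω | X i ω = 0} ∩ {ω | S ω = k}) from
        ((hXmeas i) (measurableSet_singleton 0)).inter (hS (measurableSet_singleton k)))]
      · congr 1
        ext ω
        simp only [Set.mem_union, Set.mem_inter_iff, Set.mem_setOf_eq]
        omega
      · refine Set.disjoint_left.2 ?_
        rintro ω ⟨-, h1⟩ ⟨-, h2⟩
        simp only [Set.mem_setOf_eq] at h1 h2; omega
    -- partition of {S + 1 ≤ k} by the value of X i
    have hA1part : μ ({ω | X i ω = 0} ∩ {ω | S ω + 1 ≤ k})
        + μ ({ω | X i ω = 1} ∩ {ω | S ω + 1 ≤ k}) = μ {ω | S ω + 1 ≤ k} := by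
      rw [← measure_union ?_ (show MeasurableSet ({ω | X i ω = 1} ∩ {ω | S ω + 1 ≤ k}) from
        ((hXmeas i) (measurableSet_singleton 1)).inter
          (hS (MeasurableSet.of_discrete (s := {a | a + 1 ≤ k}))))]
      · congr 1
        ext ω
        simp only [Set.mem_union, Set.mem_inter_iff, Set.mem_setOf_eq]
        have := hX01 i ω; omega
      · refine Set.disjoint_left.2 ?_
        rintro ω ⟨h0, -⟩ ⟨h1, -⟩
        simp only [Set.mem_setOf_eq] at h0 h1; omega
    -- partition of {S ≤ k} into {S + 1 ≤ k} and {S = k}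
    have hA0part : μ {ω | S ω + 1 ≤ k} + μ {ω | S ω = k} = μ {ω | S ω ≤ k} := by
      rw [← measure_union ?_ (show MeasurableSet {ω | S ω = k} from
        hS (measurableSet_singleton k))]
      · congr 1
        ext ω
        simp only [Set.mem_union, Set.mem_setOf_eq]
        omega
      · refine Set.disjoint_left.2 fun ω h1 h2 => ?_
        simp only [Set.mem_setOf_eq] at h1 h2; omega
    -- IH bounds
    have hIH0 : μ {ω | S ω ≤ k} ≤ μ {ω | Ss ω ≤ k} := ih le' k
    have hIH1 : μ {ω | S ω + 1 ≤ k} ≤ μ {ω | Ss ω + 1 ≤ k} := by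
      cases k with
      | zero => simp
      | succ k' =>
        have e1 : {ω | S ω + 1 ≤ k' + 1} = {ω | S ω ≤ k'} := by
          ext ω; simp only [Set.mem_setOf_eq]; omega
        have e2 : {ω | Ss ω + 1 ≤ k' + 1} = {ω | Ss ω ≤ k'} := by
          ext ω; simp only [Set.mem_setOf_eq]; omega
        rw [e1, e2]
        exact ih le' k'
    -- independence for the Xs side
    have hI0 : μ ({ω | Xs i ω = 0} ∩ {ω | Ss ω ≤ k}) = q * μ {ω | Ss ω ≤ k} := by
      rw [Set.inter_comm, mul_comm]
      exact st16_indep μ n Xs hXsmeas hindep i {a | a ≤ k} 0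
    have hI1 : μ ({ω | Xs i ω = 1} ∩ {ω | Ss ω + 1 ≤ k}) = p * μ {ω | Ss ω + 1 ≤ k} := by
      rw [Set.inter_comm, mul_comm]
      exact st16_indep μ n Xs hXsmeas hindep i {a | a + 1 ≤ k} 1
    calc μ {ω | S ω + X i ω ≤ k}
        = μ ({ω | X i ω = 0} ∩ {ω | S ω ≤ k})
          + μ ({ω | X i ω = 1} ∩ {ω | S ω + 1 ≤ k}) :=
          st16_split μ S (X i) k hS (hXmeas i) (hX01 i)
      _ = (μ ({ω | X i ω = 0} ∩ {ω | S ω + 1 ≤ k}) + μ ({ω | X i ω = 0} ∩ {ω | S ω = k}))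
          + μ ({ω | X i ω = 1} ∩ {ω | S ω + 1 ≤ k}) := by rw [hA0split]
      _ ≤ (μ ({ω | X i ω = 0} ∩ {ω | S ω + 1 ≤ k}) + q * μ {ω | S ω = k})
          + μ ({ω | X i ω = 1} ∩ {ω | S ω + 1 ≤ k}) :=
          add_le_add_left (add_le_add_right hC _) _
      _ = (μ ({ω | X i ω = 0} ∩ {ω | S ω + 1 ≤ k})
          + μ ({ω | X i ω = 1} ∩ {ω | S ω + 1 ≤ k})) + q * μ {ω | S ω = k} := by
          ring
      _ = μ {ω | S ω + 1 ≤ k} + q * μ {ω | S ω = k} := by rw [hA1part]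
      _ = (q + p) * μ {ω | S ω + 1 ≤ k} + q * μ {ω | S ω = k} := by rw [hpq, one_mul]
      _ = p * μ {ω | S ω + 1 ≤ k} + q * (μ {ω | S ω + 1 ≤ k} + μ {ω | S ω = k}) := by
          ring
      _ = p * μ {ω | S ω + 1 ≤ k} + q * μ {ω | S ω ≤ k} := by rw [hA0part]
      _ ≤ p * μ {ω | Ss ω + 1 ≤ k} + q * μ {ω | Ss ω ≤ k} :=
          add_le_add (mul_le_mul_right hIH1 p) (mul_le_mul_right hIH0 q)
      _ = μ ({ω | Xs i ω = 1} ∩ {ω | Ss ω + 1 ≤ k})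
          + μ ({ω | Xs i ω = 0} ∩ {ω | Ss ω ≤ k}) := by rw [hI0, hI1]
      _ = μ {ω | Ss ω + Xs i ω ≤ k} := by
          rw [st16_split μ Ss (Xs i) k hSs (hXsmeas i) (hXs01 i), add_comm]

/-- deviation bound under moderate independence.  Let
`X_1,…,X_n` be arbitrary `{0,1}`-valued random variables (encoded as `ℕ`-valued with
values `≤ 1`), and let `X*_1,…,X*_n` be mutually independent `{0,1}`-valued random
variables such that each `X*_i` is independent of `(X_1,…,X_{i-1})`.  If for every `i`
and every outcome `x` of `(X_1,…,X_{i-1})` of positive probability,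
`P(X_i = 1 | X_1 = x_1,…,X_{i-1} = x_{i-1}) ≥ P(X*_i = 1)`, then for every `k ≥ 0`,
`P(∑ X_i ≤ k) ≤ P(∑ X*_i ≤ k)`. -/
theorem statement16 {Ω : Type*} [MeasurableSpace Ω] (μ : Measure Ω)
    [IsProbabilityMeasure μ] (n : ℕ) (X Xs : Fin n → Ω → ℕ)
    (hX01 : ∀ i ω, X i ω ≤ 1) (hXs01 : ∀ i ω, Xs i ω ≤ 1)
    (hXmeas : ∀ i, Measurable (X i)) (hXsmeas : ∀ i, Measurable (Xs i))
    (hindep : iIndepFun Xs μ)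
    (hindep2 : ∀ i : Fin n,
      IndepFun (Xs i) (fun ω => fun j : Fin i.val => X (Fin.castLE i.isLt.le j) ω) μ)
    (hdom : ∀ (i : Fin n) (x : Fin i.val → ℕ),
      0 < μ {ω | ∀ j : Fin i.val, X (Fin.castLE i.isLt.le j) ω = x j} →
      μ {ω | Xs i ω = 1} * μ {ω | ∀ j : Fin i.val, X (Fin.castLE i.isLt.le j) ω = x j} ≤
        μ ({ω | X i ω = 1} ∩ {ω | ∀ j : Fin i.val, X (Fin.castLE i.isLt.le j) ω = x j})) :
    ∀ k : ℕ, μ {ω | ∑ i, X i ω ≤ k} ≤ μ {ω | ∑ i, Xs i ω ≤ k} := by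
  intro k
  exact st16_aux μ n X Xs hX01 hXs01 hXmeas hXsmeas hindep hdom n le_rfl k
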